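/- Assume (A2) and that σ₂(S^{d-1}) > 0. Then for every θ > 0, the layered stable Lévy measure ν satisfies ∫_{{z : ‖z‖ > 1}} e^{θ‖z‖} ν(dz) = ∞. (Exponential-moment part of Proposition 2.3: a layered stable distribution with σ₂ ≠ 0 has no finite exponential moments.) -/

import Mathlib

open MeasureTheory Set Filter
open scoped ENNReal

lemma inner_lintegral_top {θ β : ℝ} (hθ : 0 < θ) {f : ℝ → ℝ} {c : ℝ} (hc : 0 < c)
    (hf : Tendsto (fun r : ℝ => r ^ (β + 1) * f r) atTop (nhds c)) :
    ∫⁻ r in Ioi (1 : ℝ), ENNReal.ofReal (Real.exp (θ * r) * f r) = ⊤ := by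
  have hdiv : Tendsto (fun r : ℝ => Real.exp (θ * r) / r ^ (β + 1)) atTop atTop :=
    tendsto_exp_mul_div_rpow_atTop (β + 1) θ hθ
  have hmul : Tendsto
      (fun r : ℝ => (Real.exp (θ * r) / r ^ (β + 1)) * (r ^ (β + 1) * f r)) atTop atTop :=
    hdiv.atTop_mul_pos hc hf
  have heq : ∀ᶠ r : ℝ in atTop,
      (Real.exp (θ * r) / r ^ (β + 1)) * (r ^ (β + 1) * f r) = Real.exp (θ * r) * f r := by
    filter_upwards [eventually_gt_atTop (0 : ℝ)] with r hr
    have hne : (r : ℝ) ^ (β + 1) ≠ 0 := (Real.rpow_pos_of_pos hr _).ne'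
    field_simp
  have hTop : Tendsto (fun r : ℝ => Real.exp (θ * r) * f r) atTop atTop :=
    Tendsto.congr' heq hmul
  obtain ⟨R, hR⟩ := eventually_atTop.1 (hTop.eventually_ge_atTop 1)
  have key : (⊤ : ℝ≥0∞) ≤ ∫⁻ r in Ioi (1 : ℝ), ENNReal.ofReal (Real.exp (θ * r) * f r) := by
    calc (⊤ : ℝ≥0∞) = ∫⁻ _ in Ioi (max R 1), (1 : ℝ≥0∞) := by
          simp [Real.volume_Ioi]
      _ ≤ ∫⁻ r in Ioi (max R 1), ENNReal.ofReal (Real.exp (θ * r) * f r) := by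
          refine setLIntegral_mono' measurableSet_Ioi fun r hr => ?_
          have h1 : (1 : ℝ) ≤ Real.exp (θ * r) * f r :=
            hR r (le_of_lt (lt_of_le_of_lt (le_max_left _ _) hr))
          simpa using ENNReal.one_le_ofReal.2 h1
      _ ≤ ∫⁻ r in Ioi (1 : ℝ), ENNReal.ofReal (Real.exp (θ * r) * f r) :=
          lintegral_mono_set (Ioi_subset_Ioi (le_max_right _ _))
  exact top_unique key

/-- Exponential-moment part of Proposition 2.3: under (A2) with `σ₂(S^{d-1}) > 0`,
the layered stable Lévy measure has infinite exponential moments outside the unit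
ball, for every `θ > 0`. -/
theorem layered_stable_no_exponential_moments
    (d : ℕ) (hd : 1 ≤ d)
    (σ : Measure (Metric.sphere (0 : EuclideanSpace ℝ (Fin d)) 1))
    [IsFiniteMeasure σ]
    (β : ℝ) (hβ : 0 < β)
    (q : ℝ → Metric.sphere (0 : EuclideanSpace ℝ (Fin d)) 1 → ℝ)
    (hq_meas : Measurable (Function.uncurry q))
    (hq_pos : ∀ r : ℝ, 0 < r → ∀ ξ, 0 < q r ξ)
    (c₂ : Metric.sphere (0 : EuclideanSpace ℝ (Fin d)) 1 → ℝ)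
    (hc₂_nonneg : ∀ ξ, 0 ≤ c₂ ξ) (hc₂_int : Integrable c₂ σ)
    (hA2 : ∀ ξ, Tendsto (fun r : ℝ => r ^ (β + 1) * q r ξ) atTop (nhds (c₂ ξ)))
    (hσ₂_pos : 0 < ∫ ξ, c₂ ξ ∂σ) :
    ∀ θ : ℝ, 0 < θ →
      ∫⁻ ξ, (∫⁻ r in Ioi (1 : ℝ), ENNReal.ofReal (Real.exp (θ * r) * q r ξ)) ∂σ = ⊤ := by
  intro θ hθ
  obtain ⟨g, hg_sm, hg_ae⟩ := hc₂_int.1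
  set B : Set _ := {ξ | 0 < g ξ} with hBdef
  have hB : MeasurableSet B := hg_sm.measurable measurableSet_Ioi
  have hBpos : 0 < σ B := by
    by_contra h
    have hB0 : σ B = 0 := by simpa [not_lt, le_zero_iff] using h
    have hle : ∀ᵐ ξ ∂σ, g ξ ≤ 0 := by
      have : ∀ᵐ ξ ∂σ, ξ ∉ B := by
        rw [ae_iff]
        simpa [hBdef] using hB0
      filter_upwards [this] with ξ hξ
      simpa [hBdef, not_lt] using hξ
    have : ∫ ξ, c₂ ξ ∂σ ≤ 0 := by
      rw [integral_congr_ae hg_ae]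
      exact integral_nonpos_of_ae hle
    linarith
  have hae : ∀ᵐ ξ ∂σ, B.indicator (fun _ => (⊤ : ℝ≥0∞)) ξ ≤
      ∫⁻ r in Ioi (1 : ℝ), ENNReal.ofReal (Real.exp (θ * r) * q r ξ) := by
    filter_upwards [hg_ae] with ξ hξ
    by_cases h : ξ ∈ B
    · have hc : 0 < c₂ ξ := by rw [hξ]; exact h
      rw [inner_lintegral_top hθ hc (hA2 ξ)]
      exact le_top
    · simp [h]
  have hmono := lintegral_mono_ae hae
  rw [lintegral_indicator_const hB] at hmono
  rw [ENNReal.top_mul hBpos.ne'] at hmono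
  exact top_unique hmono
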